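/- arXiv:1007.1373 — 3 statements merged into one kernel-verified Lean document; each statement's English description precedes it below -/
import Mathlib

section
/- For all x, y ∈ (Fin 4)^ℕ with x ≠ y, if n = min{k : x k ≠ y k} is the first index of disagreement, then (1−2α)·α^n ≤ ‖π(x) − π(y)‖ ≤ √2 · α^n, where ‖·‖ is the Euclidean norm on ℝ². -/
set_option maxHeartbeats 1000000

/-- The four corner vectors `(±(1-α)/2, ±(1-α)/2)` of the 4-corner Cantor construction. -/
noncomputable def cornerV (α : ℝ) : Fin 4 → EuclideanSpace ℝ (Fin 2) := fun i =>
  (WithLp.equiv 2 (Fin 2 → ℝ)).symm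
    ![if (i : ℕ) % 2 = 0 then (1 - α) / 2 else -((1 - α) / 2),
      if (i : ℕ) < 2 then (1 - α) / 2 else -((1 - α) / 2)]

/-- The coding map `π(x) = ∑ αⁿ • v (x n)` of the 4-corner Cantor set. -/
noncomputable def cantorPi (α : ℝ) (x : ℕ → Fin 4) : EuclideanSpace ℝ (Fin 2) :=
  ∑' n : ℕ, α ^ n • cornerV α (x n)

lemma cornerV_apply_cases (α : ℝ) (i : Fin 4) (j : Fin 2) :
    cornerV α i j = (1 - α) / 2 ∨ cornerV α i j = -((1 - α) / 2) := by
  fin_cases i <;> fin_cases j <;> simp [cornerV]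

lemma cornerV_norm_le (α : ℝ) (h0 : 0 ≤ α) (h1 : α ≤ 1) (i : Fin 4) : ‖cornerV α i‖ ≤ 1 := by
  rw [EuclideanSpace.norm_eq]
  rw [show (1:ℝ) = Real.sqrt 1 by simp]
  apply Real.sqrt_le_sqrt
  rw [Fin.sum_univ_two]
  have hb : ∀ j : Fin 2, ‖cornerV α i j‖ ^ 2 ≤ ((1 - α)/2) ^ 2 := by
    intro j
    rcases cornerV_apply_cases α i j with h | h <;>
      rw [h, Real.norm_eq_abs, sq_abs] <;> nlinarith [sq_nonneg ((1 - α)/2)]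
  nlinarith [hb 0, hb 1]

lemma geomf_summable {α : ℝ} (h0 : 0 ≤ α) (h1 : α < 1) {f : ℕ → ℝ} {C : ℝ}
    (hf : ∀ k, |f k| ≤ C) : Summable (fun k => α ^ k * f k) := by
  apply Summable.of_norm_bounded (g := fun k => C * α ^ k)
    ((summable_geometric_of_lt_one h0 h1).mul_left C)
  intro k
  rw [Real.norm_eq_abs, abs_mul, abs_pow, abs_of_nonneg h0, mul_comm]
  exact mul_le_mul_of_nonneg_right (hf k) (pow_nonneg h0 k)

lemma tail_bound {α : ℝ} (h0 : 0 ≤ α) (h1 : α < 1) {f : ℕ → ℝ} {C : ℝ}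
    (hC : 0 ≤ C) (hf : ∀ k, |f k| ≤ C) (m : ℕ) :
    |∑' k : ℕ, α ^ (k + m) * f (k + m)| ≤ C * α ^ m / (1 - α) := by
  have hs : Summable (fun k : ℕ => α ^ (k + m) * f (k + m)) :=
    ((geomf_summable h0 h1 hf).comp_injective (add_left_injective m))
  have hs2 : Summable (fun k : ℕ => C * α ^ m * α ^ k) :=
    (summable_geometric_of_lt_one h0 h1).mul_left _
  have hsn : Summable (fun k : ℕ => ‖α ^ (k + m) * f (k + m)‖) := by
    simp only [Real.norm_eq_abs]; exact hs.abs
  have hstep : |∑' k : ℕ, α ^ (k + m) * f (k + m)| ≤ ∑' k : ℕ, |α ^ (k + m) * f (k + m)| := by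
    have := norm_tsum_le_tsum_norm hsn
    simp only [Real.norm_eq_abs] at this
    exact this
  calc |∑' k : ℕ, α ^ (k + m) * f (k + m)|
      ≤ ∑' k : ℕ, |α ^ (k + m) * f (k + m)| := hstep
    _ ≤ ∑' k : ℕ, C * α ^ m * α ^ k := by
        apply Summable.tsum_le_tsum _ hs.abs hs2
        intro k
        rw [abs_mul, abs_pow, abs_of_nonneg h0, pow_add]
        have hpk : (0:ℝ) ≤ α ^ k := pow_nonneg h0 k
        have hpm : (0:ℝ) ≤ α ^ m := pow_nonneg h0 m
        have h3 : (α ^ k * α ^ m) * |f (k + m)| ≤ (α ^ k * α ^ m) * C :=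
          mul_le_mul_of_nonneg_left (hf _) (mul_nonneg hpk hpm)
        nlinarith [h3]
    _ = C * α ^ m / (1 - α) := by
        rw [tsum_mul_left, tsum_geometric_of_lt_one h0 h1]
        ring

theorem stmt1 (α : ℝ) (hα : α ∈ Set.Ioo (0 : ℝ) (1 / 2)) (x y : ℕ → Fin 4)
    (hxy : x ≠ y) (n : ℕ) (hn : x n ≠ y n) (hmin : ∀ k < n, x k = y k) :
    (1 - 2 * α) * α ^ n ≤ ‖cantorPi α x - cantorPi α y‖ ∧
      ‖cantorPi α x - cantorPi α y‖ ≤ Real.sqrt 2 * α ^ n := by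
  obtain ⟨h0, h12⟩ := hα
  have h0' : (0:ℝ) ≤ α := le_of_lt h0
  have h1 : α < 1 := by linarith
  have h1a : (0:ℝ) < 1 - α := by linarith
  -- coordinate differences
  set c : Fin 2 → ℕ → ℝ := fun j k => cornerV α (x k) j - cornerV α (y k) j with hc
  have hcrfl : ∀ j k, c j k = cornerV α (x k) j - cornerV α (y k) j := fun _ _ => rfl
  have hc_bound : ∀ j k, |c j k| ≤ 1 - α := by
    intro j k
    rcases cornerV_apply_cases α (x k) j with h | h <;>
      rcases cornerV_apply_cases α (y k) j with h' | h' <;>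
      rw [hcrfl, h, h', abs_le] <;> constructor <;> linarith
  have hc_zero : ∀ j : Fin 2, ∀ k < n, c j k = 0 := by
    intro j k hk; rw [hcrfl, hmin k hk, sub_self]
  -- summability
  have hsum : ∀ z : ℕ → Fin 4, Summable (fun k : ℕ => α ^ k • cornerV α (z k)) := by
    intro z
    apply Summable.of_norm_bounded (g := fun k => α ^ k)
      (summable_geometric_of_lt_one h0' h1)
    intro k
    rw [norm_smul, Real.norm_eq_abs, abs_pow, abs_of_nonneg h0']
    calc α ^ k * ‖cornerV α (z k)‖ ≤ α ^ k * 1 :=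
          mul_le_mul_of_nonneg_left (cornerV_norm_le α h0' (le_of_lt h1) _) (pow_nonneg h0' k)
      _ = α ^ k := mul_one _
  set d : ℕ → EuclideanSpace ℝ (Fin 2) :=
    fun k => α ^ k • (cornerV α (x k) - cornerV α (y k)) with hd
  have hd_eq : ∀ k, d k = α ^ k • cornerV α (x k) - α ^ k • cornerV α (y k) :=
    fun k => smul_sub _ _ _
  have hd_sum : Summable d := by
    rw [show d = fun k => α ^ k • cornerV α (x k) - α ^ k • cornerV α (y k) from
      funext hd_eq]
    exact (hsum x).sub (hsum y)
  have hπ : cantorPi α x - cantorPi α y = ∑' k, d k := by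
    rw [cantorPi, cantorPi, ← Summable.tsum_sub (hsum x) (hsum y)]
    exact tsum_congr fun k => (hd_eq k).symm
  -- coordinates of the tsum
  have hcoord : ∀ j : Fin 2, (∑' k, d k) j = ∑' k, α ^ k * c j k := by
    intro j
    have h2 : (∑' k, d k) j = ∑' k, (d k) j :=
      ContinuousLinearMap.map_tsum (EuclideanSpace.proj (𝕜 := ℝ) j) hd_sum
    rw [h2]
    apply tsum_congr
    intro k
    rw [show (d k) j = α ^ k * (cornerV α (x k) j - cornerV α (y k) j) from rfl, hcrfl]
  -- per-coordinate sums
  set D : Fin 2 → ℝ := fun j => ∑' k, α ^ k * c j k with hD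
  have hDrfl : ∀ j, D j = ∑' k, α ^ k * c j k := fun _ => rfl
  have hDsum : ∀ j, Summable (fun k => α ^ k * c j k) := fun j =>
    geomf_summable h0' h1 (hc_bound j)
  -- upper bound per coordinate
  have hupper : ∀ j, |D j| ≤ α ^ n := by
    intro j
    have hsplit := Summable.sum_add_tsum_nat_add (f := fun k => α ^ k * c j k) n (hDsum j)
    have hz : ∑ k ∈ Finset.range n, α ^ k * c j k = 0 := by
      apply Finset.sum_eq_zero
      intro k hk
      rw [hc_zero j k (Finset.mem_range.mp hk), mul_zero]
    rw [hDrfl, ← hsplit, hz, zero_add]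
    calc |∑' k : ℕ, α ^ (k + n) * c j (k + n)| ≤ (1 - α) * α ^ n / (1 - α) :=
          tail_bound h0' h1 (le_of_lt h1a) (hc_bound j) n
      _ = α ^ n := by field_simp
  -- lower bound at the distinguishing coordinate
  obtain ⟨j₀, hj₀⟩ : ∃ j : Fin 2, |c j n| = 1 - α := by
    have hne : ∃ j : Fin 2, cornerV α (x n) j ≠ cornerV α (y n) j := by
      by_contra h
      push_neg at h
      apply hn
      have hinj : ∀ i i' : Fin 4, (∀ j, cornerV α i j = cornerV α i' j) → i = i' := by
        intro i i' hii
        by_contra hne'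
        have h2 : (1 - α) / 2 ≠ -((1 - α) / 2) := fun h' => by linarith [h']
        fin_cases i <;> fin_cases i' <;> simp_all <;>
          first
          | exact h2 (by simpa [cornerV] using hii 0)
          | exact h2 (by simpa [cornerV] using hii 1)
          | exact h2 (by simpa [cornerV] using (hii 0).symm)
          | exact h2 (by simpa [cornerV] using (hii 1).symm)
          | exact h2 (by simpa [cornerV] using hii.1)
          | exact h2 (by simpa [cornerV] using hii.2)
          | exact h2 (by simpa [cornerV] using hii.1.symm)
          | exact h2 (by simpa [cornerV] using hii.2.symm)
      exact hinj _ _ h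
    obtain ⟨j, hj⟩ := hne
    refine ⟨j, ?_⟩
    rcases cornerV_apply_cases α (x n) j with h | h <;>
      rcases cornerV_apply_cases α (y n) j with h' | h'
    · exact absurd (h.trans h'.symm) hj
    · rw [hcrfl, h, h', abs_eq (by linarith : (0:ℝ) ≤ 1 - α)]; left; ring
    · rw [hcrfl, h, h', abs_eq (by linarith : (0:ℝ) ≤ 1 - α)]; right; ring
    · exact absurd (h.trans h'.symm) hj
  have hlower : (1 - 2 * α) * α ^ n ≤ |D j₀| := by
    have hsplit := Summable.sum_add_tsum_nat_add (f := fun k => α ^ k * c j₀ k) (n + 1) (hDsum j₀)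
    have hz : ∑ k ∈ Finset.range (n + 1), α ^ k * c j₀ k = α ^ n * c j₀ n := by
      rw [Finset.sum_range_succ]
      have hz0 : ∑ k ∈ Finset.range n, α ^ k * c j₀ k = 0 := by
        apply Finset.sum_eq_zero
        intro k hk
        rw [hc_zero j₀ k (Finset.mem_range.mp hk), mul_zero]
      rw [hz0, zero_add]
    have htail : |∑' k : ℕ, α ^ (k + (n + 1)) * c j₀ (k + (n + 1))| ≤ α ^ (n + 1) := by
      calc |∑' k : ℕ, α ^ (k + (n + 1)) * c j₀ (k + (n + 1))|
          ≤ (1 - α) * α ^ (n + 1) / (1 - α) :=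
            tail_bound h0' h1 (le_of_lt h1a) (hc_bound j₀) (n + 1)
        _ = α ^ (n + 1) := by field_simp
    have hhead : |α ^ n * c j₀ n| = α ^ n * (1 - α) := by
      rw [abs_mul, abs_pow, abs_of_nonneg h0', hj₀]
    have hD0 : D j₀ = α ^ n * c j₀ n + ∑' k : ℕ, α ^ (k + (n + 1)) * c j₀ (k + (n + 1)) := by
      rw [hDrfl, ← hsplit, hz]
    rw [hD0]
    set T := ∑' k : ℕ, α ^ (k + (n + 1)) * c j₀ (k + (n + 1)) with hT
    have h1' : |α ^ n * c j₀ n| - |T| ≤ |α ^ n * c j₀ n + T| := by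
      have habs := abs_add_le (α ^ n * c j₀ n + T) (-T)
      rw [add_neg_cancel_right, abs_neg] at habs
      linarith
    calc (1 - 2 * α) * α ^ n = α ^ n * (1 - α) - α ^ (n + 1) := by ring
      _ ≤ |α ^ n * c j₀ n| - |T| := by rw [hhead]; linarith
      _ ≤ |α ^ n * c j₀ n + T| := h1'
  -- combine
  have hw : ∀ j, (cantorPi α x - cantorPi α y) j = D j := by
    intro j
    rw [show (cantorPi α x - cantorPi α y) j = (∑' k, d k) j by rw [hπ], hcoord j, hDrfl]
  have hnorm : ‖cantorPi α x - cantorPi α y‖ = Real.sqrt (D 0 ^ 2 + D 1 ^ 2) := by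
    rw [EuclideanSpace.norm_eq, Fin.sum_univ_two, hw 0, hw 1,
      Real.norm_eq_abs, Real.norm_eq_abs, sq_abs, sq_abs]
  have hpow : (0:ℝ) ≤ α ^ n := pow_nonneg h0' n
  have hsq : D j₀ ^ 2 ≤ D 0 ^ 2 + D 1 ^ 2 := by
    have hs0 := sq_nonneg (D 0)
    have hs1 := sq_nonneg (D 1)
    have : j₀ = 0 ∨ j₀ = 1 := by omega
    rcases this with h | h <;> rw [h] <;> linarith
  constructor
  · rw [hnorm]
    calc (1 - 2 * α) * α ^ n ≤ |D j₀| := hlower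
      _ = Real.sqrt (D j₀ ^ 2) := (Real.sqrt_sq_eq_abs _).symm
      _ ≤ Real.sqrt (D 0 ^ 2 + D 1 ^ 2) := Real.sqrt_le_sqrt hsq
  · rw [hnorm]
    have h0u := hupper 0
    have h1u := hupper 1
    have hb : D 0 ^ 2 + D 1 ^ 2 ≤ 2 * (α ^ n) ^ 2 := by
      have e0 : D 0 ^ 2 = |D 0| ^ 2 := (sq_abs _).symm
      have e1 : D 1 ^ 2 = |D 1| ^ 2 := (sq_abs _).symm
      rw [e0, e1]
      nlinarith [abs_nonneg (D 0), abs_nonneg (D 1)]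
    calc Real.sqrt (D 0 ^ 2 + D 1 ^ 2) ≤ Real.sqrt (2 * (α ^ n) ^ 2) :=
          Real.sqrt_le_sqrt hb
      _ = Real.sqrt 2 * α ^ n := by
          rw [Real.sqrt_mul (by norm_num), Real.sqrt_sq hpow]
end

section
/- With respect to the standard metric d(x,y) = (1/2)^{min{k : x k ≠ y k}} on the sequence space (Fin 4)^ℕ (and d(x,x)=0), the coding map π is Hölder continuous with constant √2 and exponent s = log(1/α)/log 2; that is, ‖π(x) − π(y)‖ ≤ √2 · d(x,y)^s for all x, y. -/
open Classical in
/-- The standard ultrametric distance `d(x,y) = (1/2)^{min{k : x k ≠ y k}}` on `(Fin 4)^ℕ`. -/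
noncomputable def seqDist (x y : ℕ → Fin 4) : ℝ :=
  if h : x = y then 0 else (1 / 2) ^ Nat.find (Function.ne_iff.mp h)

lemma norm_cornerV (α : ℝ) (hα1 : α ≤ 1) (i : Fin 4) :
    ‖cornerV α i‖ = Real.sqrt 2 * ((1 - α) / 2) := by
  have h0 : (0:ℝ) ≤ (1 - α) / 2 := by linarith
  have key : ‖cornerV α i‖ = Real.sqrt (2 * ((1 - α) / 2) ^ 2) := by
    rw [EuclideanSpace.norm_eq]
    congr 1
    simp only [cornerV, WithLp.equiv_symm_apply, WithLp.ofLp_toLp, Fin.sum_univ_two,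
      Matrix.cons_val_zero, Matrix.cons_val_one, Matrix.head_cons, Real.norm_eq_abs, sq_abs]
    split_ifs <;> ring
  rw [key, Real.sqrt_mul (by norm_num) _, Real.sqrt_sq h0]

lemma summable_aux (α : ℝ) (hα : α ∈ Set.Ioo (0 : ℝ) (1 / 2)) (x : ℕ → Fin 4) :
    Summable (fun n : ℕ => α ^ n • cornerV α (x n)) := by
  obtain ⟨h0, h2⟩ := hα
  have hα1 : α ≤ 1 := by linarith
  apply Summable.of_norm
  have : ∀ n : ℕ, ‖α ^ n • cornerV α (x n)‖ = α ^ n * (Real.sqrt 2 * ((1 - α) / 2)) := by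
    intro n
    rw [norm_smul, norm_cornerV α hα1, Real.norm_eq_abs, abs_pow, abs_of_pos h0]
  simp only [this]
  exact (summable_geometric_of_lt_one h0.le (by linarith)).mul_right _

theorem stmt2 (α : ℝ) (hα : α ∈ Set.Ioo (0 : ℝ) (1 / 2)) (x y : ℕ → Fin 4) :
    ‖cantorPi α x - cantorPi α y‖ ≤
      Real.sqrt 2 * seqDist x y ^ (Real.log (1 / α) / Real.log 2) := by
  obtain ⟨h0, h2⟩ := hα
  have hα1 : α < 1 := by linarith
  have hs : (0:ℝ) < Real.log (1 / α) / Real.log 2 := by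
    apply div_pos
    · apply Real.log_pos; rw [lt_div_iff₀ h0]; linarith
    · exact Real.log_pos (by norm_num)
  by_cases hxy : x = y
  · subst hxy
    rw [sub_self, norm_zero, show seqDist x x = 0 from by simp [seqDist],
      Real.zero_rpow hs.ne', mul_zero]
  · have hne := Function.ne_iff.mp hxy
    set N := Nat.find hne with hNdef
    have hlt : ∀ m < N, x m = y m := fun m hm => not_not.mp (Nat.find_min hne hm)
    -- seqDist
    have hdist : seqDist x y = (1/2 : ℝ) ^ N := by
      simp only [seqDist, dif_neg hxy]
      rfl
    -- RHS computation
    have hhalf : ((1:ℝ)/2) ^ (Real.log (1 / α) / Real.log 2) = α := by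
      rw [Real.rpow_def_of_pos (by norm_num : (0:ℝ) < 1/2)]
      have : Real.log (1/2) = -Real.log 2 := by
        rw [one_div, Real.log_inv]
      rw [this]
      have h2ne : Real.log 2 ≠ 0 := ne_of_gt (Real.log_pos (by norm_num))
      have : -Real.log 2 * (Real.log (1 / α) / Real.log 2) = Real.log α := by
        rw [one_div, Real.log_inv]
        field_simp
      rw [this, Real.exp_log h0]
    have hRHS : seqDist x y ^ (Real.log (1 / α) / Real.log 2) = α ^ N := by
      rw [hdist, ← Real.rpow_natCast ((1:ℝ)/2) N, ← Real.rpow_mul (by norm_num),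
        mul_comm, Real.rpow_mul (by norm_num), hhalf, Real.rpow_natCast]
    rw [hRHS]
    -- LHS bound
    have hsx := summable_aux α ⟨h0, h2⟩ x
    have hsy := summable_aux α ⟨h0, h2⟩ y
    have hdiff : cantorPi α x - cantorPi α y
        = ∑' n : ℕ, (α ^ n • cornerV α (x n) - α ^ n • cornerV α (y n)) :=
      (hsx.tsum_sub hsy).symm
    set g : ℕ → ℝ := fun n => if n < N then 0 else Real.sqrt 2 * (1 - α) * α ^ n with hg
    have hbound : ∀ n : ℕ, ‖α ^ n • cornerV α (x n) - α ^ n • cornerV α (y n)‖ ≤ g n := by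
      intro n
      by_cases hn : n < N
      · rw [hlt n hn]; simp [hg, hn]
      · simp only [hg, if_neg hn]
        calc ‖α ^ n • cornerV α (x n) - α ^ n • cornerV α (y n)‖
            ≤ ‖α ^ n • cornerV α (x n)‖ + ‖α ^ n • cornerV α (y n)‖ := norm_sub_le _ _
          _ = α ^ n * (Real.sqrt 2 * ((1-α)/2)) + α ^ n * (Real.sqrt 2 * ((1-α)/2)) := by
              rw [norm_smul, norm_smul, norm_cornerV α hα1.le (x n), norm_cornerV α hα1.le (y n),
                Real.norm_eq_abs, abs_pow,
                abs_of_pos h0]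
          _ = Real.sqrt 2 * (1 - α) * α ^ n := by ring
    have hgsum : Summable g := by
      apply Summable.of_nonneg_of_le (fun n => ?_) (fun n => ?_)
        (((summable_geometric_of_lt_one h0.le hα1).mul_left (Real.sqrt 2 * (1 - α))))
      · simp only [hg]; split_ifs
        · exact le_rfl
        · exact mul_nonneg (mul_nonneg (Real.sqrt_nonneg _) (by linarith)) (pow_nonneg h0.le n)
      · simp only [hg]; split_ifs
        · exact mul_nonneg (mul_nonneg (Real.sqrt_nonneg _) (by linarith)) (pow_nonneg h0.le n)
        · exact le_rfl
    have hnormsum : Summable (fun n : ℕ => ‖α ^ n • cornerV α (x n) - α ^ n • cornerV α (y n)‖) :=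
      Summable.of_nonneg_of_le (fun n => norm_nonneg _) hbound hgsum
    have htsumg : ∑' n, g n = Real.sqrt 2 * α ^ N := by
      have hinj : Function.Injective (fun n : ℕ => n + N) := add_left_injective N
      have hsupp : Function.support g ⊆ Set.range (fun n : ℕ => n + N) := by
        intro n hn
        simp only [hg, Function.mem_support] at hn
        by_cases h : n < N
        · simp [h] at hn
        · exact ⟨n - N, show n - N + N = n by omega⟩
      rw [← hinj.tsum_eq hsupp]
      have : ∀ n : ℕ, g (n + N) = (Real.sqrt 2 * (1 - α) * α ^ N) * α ^ n := by
        intro n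
        simp only [hg, if_neg (by omega : ¬ n + N < N), pow_add]
        ring
      simp only [this]
      rw [tsum_mul_left, tsum_geometric_of_lt_one h0.le hα1]
      have h1α : (1:ℝ) - α ≠ 0 := by linarith
      field_simp
    calc ‖cantorPi α x - cantorPi α y‖
        = ‖∑' n : ℕ, (α ^ n • cornerV α (x n) - α ^ n • cornerV α (y n))‖ := by rw [hdiff]
      _ ≤ ∑' n : ℕ, ‖α ^ n • cornerV α (x n) - α ^ n • cornerV α (y n)‖ :=
          norm_tsum_le_tsum_norm hnormsum
      _ ≤ ∑' n, g n := hnormsum.tsum_le_tsum hbound hgsum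
      _ = Real.sqrt 2 * α ^ N := htsumg
end

section
/- Fix ℓ with 1 < ℓ < 1/(2α). For a word w ∈ (Fin 4)^n let D_w denote the closed axis-parallel square with center c_w = ∑_{k<n} α^k • v(w k) and sidelength ℓ·α^n (the ℓ-dilate of the generation-n square of the Cantor construction). Then: (i) for every word w and every i ∈ Fin 4, the square D_{w·i} associated to the extended word w·i is contained in the interior of D_w; (ii) if neither of two distinct words w, w' is an initial segment of the other, then D_w ∩ D_{w'} = ∅; (iii) for any two distinct words w ≠ w', the topological boundaries ∂D_w and ∂D_{w'} are disjoint. -/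
/-- The center `c_w = ∑_{k<n} α^k • v (w k)` of the generation-`n` square indexed by `w`. -/
noncomputable def cylCenter (α : ℝ) {n : ℕ} (w : Fin n → Fin 4) :
    EuclideanSpace ℝ (Fin 2) :=
  ∑ k : Fin n, α ^ (k : ℕ) • cornerV α (w k)

/-- The closed axis-parallel square of center `c_w` and sidelength `ℓ·αⁿ`
(the `ℓ`-dilate of the generation-`n` square of the Cantor construction). -/
noncomputable def dilSq (α ℓ : ℝ) {n : ℕ} (w : Fin n → Fin 4) :
    Set (EuclideanSpace ℝ (Fin 2)) :=
  {p | ∀ i : Fin 2, |p i - cylCenter α w i| ≤ ℓ * α ^ n / 2}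

/- ### Auxiliary lemmas -/

lemma cylCenter_apply (α : ℝ) {n : ℕ} (w : Fin n → Fin 4) (j : Fin 2) :
    cylCenter α w j = ∑ k : Fin n, α ^ (k : ℕ) * cornerV α (w k) j := by
  show (∑ k : Fin n, α ^ (k:ℕ) • cornerV α (w k)) j = _
  rw [show ((∑ k : Fin n, α ^ (k:ℕ) • cornerV α (w k)) j)
      = (∑ k : Fin n, α ^ (k:ℕ) • cornerV α (w k) : Fin 2 → ℝ) j from by simp,
    Finset.sum_apply]
  rfl

lemma cornerV_abs {α : ℝ} (hα : α ≤ 1) (a : Fin 4) (i : Fin 2) :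
    |cornerV α a i| = (1 - α) / 2 := by
  fin_cases a <;> fin_cases i <;>
    simp [cornerV, abs_of_nonneg, abs_neg,
      show (0:ℝ) ≤ (1-α)/2 by linarith]

lemma cornerV_diff {α : ℝ} (hα : α ≤ 1) {a b : Fin 4} (h : a ≠ b) :
    ∃ i : Fin 2, |cornerV α a i - cornerV α b i| = 1 - α := by
  have h1 : |((1-α)/2) - (-((1-α)/2))| = 1 - α := by
    rw [sub_neg_eq_add, abs_of_nonneg (by linarith)]; ring
  have h2 : |(-((1-α)/2)) - ((1-α)/2)| = 1 - α := by
    rw [abs_sub_comm]; exact h1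
  fin_cases a <;> fin_cases b <;>
    first
      | exact absurd rfl h
      | exact ⟨0, by simpa [cornerV] using h1⟩
      | exact ⟨0, by simpa [cornerV] using h2⟩
      | exact ⟨1, by simpa [cornerV] using h1⟩
      | exact ⟨1, by simpa [cornerV] using h2⟩

lemma cylCenter_snoc (α : ℝ) {n : ℕ} (w : Fin n → Fin 4) (i : Fin 4) (j : Fin 2) :
    cylCenter α (Fin.snoc w i) j = cylCenter α w j + α ^ n * cornerV α i j := by
  rw [cylCenter_apply, cylCenter_apply, Fin.sum_univ_castSucc]
  simp

lemma dilSq_isClosed (α ℓ : ℝ) {n : ℕ} (w : Fin n → Fin 4) :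
    IsClosed (dilSq α ℓ w) := by
  have : dilSq α ℓ w = ⋂ i : Fin 2,
      {p : EuclideanSpace ℝ (Fin 2) | |p i - cylCenter α w i| ≤ ℓ * α ^ n / 2} := by
    ext p; simp [dilSq, Set.mem_iInter]
  rw [this]
  refine isClosed_iInter fun i => isClosed_le ?_ continuous_const
  exact (((EuclideanSpace.proj i (𝕜 := ℝ)).continuous).sub continuous_const).abs

lemma strict_subset_interior (α ℓ : ℝ) {n : ℕ} (w : Fin n → Fin 4) :
    {p : EuclideanSpace ℝ (Fin 2) | ∀ i : Fin 2, |p i - cylCenter α w i| < ℓ * α ^ n / 2}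
      ⊆ interior (dilSq α ℓ w) := by
  apply interior_maximal
  · intro p hp i; exact (hp i).le
  · have : {p : EuclideanSpace ℝ (Fin 2) | ∀ i : Fin 2,
        |p i - cylCenter α w i| < ℓ * α ^ n / 2}
        = ⋂ i : Fin 2, {p : EuclideanSpace ℝ (Fin 2) |
            |p i - cylCenter α w i| < ℓ * α ^ n / 2} := by
      ext p; simp [Set.mem_iInter]
    rw [this]
    refine isOpen_iInter_of_finite fun i => isOpen_lt ?_ continuous_const
    exact (((EuclideanSpace.proj i (𝕜 := ℝ)).continuous).sub continuous_const).abs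

lemma snoc_subset {α ℓ : ℝ} (hα0 : 0 < α) (hα1 : α < 1) (hℓ : 1 < ℓ)
    {n : ℕ} (w : Fin n → Fin 4) (i : Fin 4) :
    dilSq α ℓ (Fin.snoc w i) ⊆ interior (dilSq α ℓ w) := by
  intro p hp
  apply strict_subset_interior α ℓ w
  intro j
  have h1 : |p j - cylCenter α (Fin.snoc w i) j| ≤ ℓ * α ^ (n+1) / 2 := hp j
  have h2 : |cylCenter α (Fin.snoc w i) j - cylCenter α w j| = α ^ n * ((1 - α)/2) := by
    rw [cylCenter_snoc]
    rw [show cylCenter α w j + α ^ n * cornerV α i j - cylCenter α w j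
        = α ^ n * cornerV α i j by ring]
    rw [abs_mul, abs_of_nonneg (pow_nonneg hα0.le n), cornerV_abs hα1.le]
  have h3 : |p j - cylCenter α w j|
      ≤ |p j - cylCenter α (Fin.snoc w i) j| + |cylCenter α (Fin.snoc w i) j - cylCenter α w j| := by
    have := abs_sub_abs_le_abs_sub (p j - cylCenter α w j) 0
    calc |p j - cylCenter α w j|
        = |(p j - cylCenter α (Fin.snoc w i) j) + (cylCenter α (Fin.snoc w i) j - cylCenter α w j)| := by
          ring_nf
      _ ≤ _ := abs_add_le _ _
  have hpow : (0:ℝ) < α ^ n := pow_pos hα0 n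
  have hps : α ^ (n+1) = α ^ n * α := pow_succ α n
  rw [h2] at h3
  nlinarith [h1, h3, hps, mul_pos hpow (mul_pos (sub_pos.2 hℓ) (sub_pos.2 hα1))]

lemma restrict_subset {α ℓ : ℝ} (hα0 : 0 < α) (hα1 : α < 1) (hℓ : 1 < ℓ) {n : ℕ} :
    ∀ (m : ℕ) (h : n ≤ m) (w' : Fin m → Fin 4),
      dilSq α ℓ w' ⊆ dilSq α ℓ (w' ∘ Fin.castLE h) := by
  refine Nat.le_induction ?_ ?_
  · intro w'
    have : w' ∘ Fin.castLE (le_refl n) = w' := funext fun k => congrArg w' (Fin.ext rfl)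
    rw [this]
  · intro m hm ih w'
    have h1 : dilSq α ℓ w' ⊆ dilSq α ℓ (Fin.init w') := by
      have := snoc_subset hα0 hα1 hℓ (Fin.init w') (w' (Fin.last m))
      rw [Fin.snoc_init_self] at this
      exact this.trans interior_subset
    have heq : Fin.init w' ∘ Fin.castLE hm = w' ∘ Fin.castLE (Nat.le_succ_of_le hm) :=
      funext fun k => congrArg w' (Fin.ext rfl)
    refine h1.trans ?_
    have := ih (Fin.init w')
    rw [heq] at this
    intro p hp
    have hh := this hp
    intro j
    have : cylCenter α (w' ∘ Fin.castLE (Nat.le_succ_of_le hm))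
        = cylCenter α (w' ∘ Fin.castLE (show n ≤ m + 1 from Nat.le_succ_of_le hm)) := rfl
    exact hh j

lemma restrict_strict {α ℓ : ℝ} (hα0 : 0 < α) (hα1 : α < 1) (hℓ : 1 < ℓ) {n m : ℕ}
    (h : n < m) (w' : Fin m → Fin 4) :
    dilSq α ℓ w' ⊆ interior (dilSq α ℓ (w' ∘ Fin.castLE h.le)) := by
  have h1 : n + 1 ≤ m := h
  have hsub := restrict_subset hα0 hα1 hℓ m h1 w'
  set u : Fin (n+1) → Fin 4 := w' ∘ Fin.castLE h1 with hu
  have h2 : dilSq α ℓ u ⊆ interior (dilSq α ℓ (Fin.init u)) := by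
    have := snoc_subset hα0 hα1 hℓ (Fin.init u) (u (Fin.last n))
    rwa [Fin.snoc_init_self] at this
  have heq : Fin.init u = w' ∘ Fin.castLE h.le :=
    funext fun k => congrArg w' (Fin.ext rfl)
  rw [heq] at h2
  exact hsub.trans h2

lemma dilSq_disjoint {α ℓ : ℝ} (hα : α ∈ Set.Ioo (0 : ℝ) (1 / 2))
    (hℓ₁ : 1 < ℓ) (hℓ₂ : ℓ < 1 / (2 * α))
    {n m : ℕ} (w : Fin n → Fin 4) (w' : Fin m → Fin 4)
    (H1 : ¬ ∃ h : n ≤ m, ∀ k : Fin n, w k = w' (Fin.castLE h k))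
    (H2 : ¬ ∃ h : m ≤ n, ∀ k : Fin m, w' k = w (Fin.castLE h k)) :
    dilSq α ℓ w ∩ dilSq α ℓ w' = ∅ := by
  classical
  obtain ⟨hα0, hα2⟩ := hα
  have hα1 : α < 1 := by linarith
  -- there is an index where the words differ
  have hex : ∃ j : ℕ, ∃ (h1 : j < n) (h2 : j < m), w ⟨j, h1⟩ ≠ w' ⟨j, h2⟩ := by
    by_contra hc
    push_neg at hc
    rcases le_or_gt n m with hnm | hnm
    · exact H1 ⟨hnm, fun k => hc k.1 k.2 (lt_of_lt_of_le k.2 hnm)⟩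
    · exact H2 ⟨hnm.le, fun k => (hc k.1 (lt_of_lt_of_le k.2 hnm.le) k.2).symm⟩
  set j := Nat.find hex with hjdef
  obtain ⟨hj1, hj2, hjne⟩ := Nat.find_spec hex
  have hmin : ∀ k, k < j → ∀ (h1 : k < n) (h2 : k < m), w ⟨k, h1⟩ = w' ⟨k, h2⟩ := by
    intro k hk h1 h2
    by_contra hne
    exact Nat.find_min hex hk ⟨h1, h2, hne⟩
  set a := w ⟨j, hj1⟩ with ha
  set b := w' ⟨j, hj2⟩ with hb
  set u : Fin (j+1) → Fin 4 := w ∘ Fin.castLE hj1 with hudef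
  set u' : Fin (j+1) → Fin 4 := w' ∘ Fin.castLE hj2 with hu'def
  have hsubw : dilSq α ℓ w ⊆ dilSq α ℓ u := restrict_subset hα0 hα1 hℓ₁ n hj1 w
  have hsubw' : dilSq α ℓ w' ⊆ dilSq α ℓ u' := restrict_subset hα0 hα1 hℓ₁ m hj2 w'
  obtain ⟨i, hi⟩ := cornerV_diff hα1.le (show a ≠ b from hjne)
  have hpre : ∀ k : Fin j, u (Fin.castSucc k) = u' (Fin.castSucc k) := fun k =>
    hmin k.1 k.2 (k.2.trans hj1) (k.2.trans hj2)
  have hcent : cylCenter α u i - cylCenter α u' i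
      = α ^ j * (cornerV α a i - cornerV α b i) := by
    rw [cylCenter_apply, cylCenter_apply, ← Finset.sum_sub_distrib,
      Fin.sum_univ_castSucc]
    rw [Finset.sum_eq_zero (fun k _ => by rw [hpre k]; ring), zero_add]
    have hul : u (Fin.last j) = a := rfl
    have hul' : u' (Fin.last j) = b := rfl
    rw [hul, hul']
    have : ((Fin.last j : Fin (j+1)) : ℕ) = j := rfl
    rw [this]; ring
  rw [Set.eq_empty_iff_forall_notMem]
  rintro p ⟨hp, hp'⟩
  have h1 : |p i - cylCenter α u i| ≤ ℓ * α ^ (j+1) / 2 := hsubw hp i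
  have h2 : |p i - cylCenter α u' i| ≤ ℓ * α ^ (j+1) / 2 := hsubw' hp' i
  have h3 : |cylCenter α u i - cylCenter α u' i| ≤ ℓ * α ^ (j+1) := by
    calc |cylCenter α u i - cylCenter α u' i|
        = |(cylCenter α u i - p i) + (p i - cylCenter α u' i)| := by ring_nf
      _ ≤ |cylCenter α u i - p i| + |p i - cylCenter α u' i| := abs_add_le _ _
      _ = |p i - cylCenter α u i| + |p i - cylCenter α u' i| := by rw [abs_sub_comm]
      _ ≤ ℓ * α ^ (j+1) / 2 + ℓ * α ^ (j+1) / 2 := add_le_add h1 h2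
      _ = ℓ * α ^ (j+1) := by ring
  have h4 : |cylCenter α u i - cylCenter α u' i| = α ^ j * (1 - α) := by
    rw [hcent, abs_mul, abs_of_nonneg (pow_nonneg hα0.le j), hi]
  rw [h4] at h3
  have hpow : (0:ℝ) < α ^ j := pow_pos hα0 j
  have hps : α ^ (j+1) = α ^ j * α := pow_succ α j
  rw [lt_div_iff₀ (by positivity)] at hℓ₂
  nlinarith [h3]

theorem stmt8 (α : ℝ) (hα : α ∈ Set.Ioo (0 : ℝ) (1 / 2))
    (ℓ : ℝ) (hℓ₁ : 1 < ℓ) (hℓ₂ : ℓ < 1 / (2 * α)) :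
    (∀ (n : ℕ) (w : Fin n → Fin 4) (i : Fin 4),
      dilSq α ℓ (Fin.snoc w i) ⊆ interior (dilSq α ℓ w)) ∧
    (∀ (n m : ℕ) (w : Fin n → Fin 4) (w' : Fin m → Fin 4),
      (¬ ∃ h : n ≤ m, ∀ k : Fin n, w k = w' (Fin.castLE h k)) →
      (¬ ∃ h : m ≤ n, ∀ k : Fin m, w' k = w (Fin.castLE h k)) →
      dilSq α ℓ w ∩ dilSq α ℓ w' = ∅) ∧
    (∀ (n m : ℕ) (w : Fin n → Fin 4) (w' : Fin m → Fin 4),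
      (¬ ∃ h : n = m, ∀ k : Fin n, w k = w' (Fin.cast h k)) →
      frontier (dilSq α ℓ w) ∩ frontier (dilSq α ℓ w') = ∅) := by
  obtain ⟨hα0, hα2⟩ := hα
  have hα1 : α < 1 := by linarith
  refine ⟨fun n w i => snoc_subset hα0 hα1 hℓ₁ w i,
    fun n m w w' H1 H2 => dilSq_disjoint ⟨hα0, hα2⟩ hℓ₁ hℓ₂ w w' H1 H2, ?_⟩
  -- part (iii)
  have aux : ∀ (n m : ℕ) (w : Fin n → Fin 4) (w' : Fin m → Fin 4), n < m →
      frontier (dilSq α ℓ w) ∩ frontier (dilSq α ℓ w') = ∅ := by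
    intro n m w w' hlt
    by_cases hpre : ∀ k : Fin n, w k = w' (Fin.castLE hlt.le k)
    · -- w is a prefix of w' : nested strictly
      have hw : w = w' ∘ Fin.castLE hlt.le := funext hpre
      have hsub : dilSq α ℓ w' ⊆ interior (dilSq α ℓ w) := by
        rw [hw]; exact restrict_strict hα0 hα1 hℓ₁ hlt w'
      rw [Set.eq_empty_iff_forall_notMem]
      rintro x ⟨hx1, hx2⟩
      have hxw' : x ∈ dilSq α ℓ w' := (dilSq_isClosed α ℓ w').frontier_subset hx2
      have : x ∈ interior (dilSq α ℓ w) := hsub hxw'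
      exact hx1.2 this
    · -- incomparable
      have H1 : ¬ ∃ h : n ≤ m, ∀ k : Fin n, w k = w' (Fin.castLE h k) := by
        rintro ⟨h, hk⟩; exact hpre hk
      have H2 : ¬ ∃ h : m ≤ n, ∀ k : Fin m, w' k = w (Fin.castLE h k) := by
        rintro ⟨h, _⟩; exact absurd h (not_le.2 hlt)
      have hdisj := dilSq_disjoint ⟨hα0, hα2⟩ hℓ₁ hℓ₂ w w' H1 H2
      rw [Set.eq_empty_iff_forall_notMem]
      rintro x ⟨hx1, hx2⟩
      have hxw : x ∈ dilSq α ℓ w := (dilSq_isClosed α ℓ w).frontier_subset hx1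
      have hxw' : x ∈ dilSq α ℓ w' := (dilSq_isClosed α ℓ w').frontier_subset hx2
      rw [Set.eq_empty_iff_forall_notMem] at hdisj
      exact hdisj x ⟨hxw, hxw'⟩
  intro n m w w' H
  rcases lt_trichotomy n m with hlt | heq | hgt
  · exact aux n m w w' hlt
  · subst heq
    have hne : ∃ k : Fin n, w k ≠ w' k := by
      by_contra hc
      push_neg at hc
      exact H ⟨rfl, fun k => hc k⟩
    have H1 : ¬ ∃ h : n ≤ n, ∀ k : Fin n, w k = w' (Fin.castLE h k) := by
      rintro ⟨h, hk⟩
      obtain ⟨k, hkne⟩ := hne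
      exact hkne ((hk k).trans (congrArg w' (Fin.ext rfl)))
    have H2 : ¬ ∃ h : n ≤ n, ∀ k : Fin n, w' k = w (Fin.castLE h k) := by
      rintro ⟨h, hk⟩
      obtain ⟨k, hkne⟩ := hne
      exact hkne (((hk k).trans (congrArg w (Fin.ext rfl))).symm)
    have hdisj := dilSq_disjoint ⟨hα0, hα2⟩ hℓ₁ hℓ₂ w w' H1 H2
    rw [Set.eq_empty_iff_forall_notMem]
    rintro x ⟨hx1, hx2⟩
    have hxw : x ∈ dilSq α ℓ w := (dilSq_isClosed α ℓ w).frontier_subset hx1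
    have hxw' : x ∈ dilSq α ℓ w' := (dilSq_isClosed α ℓ w').frontier_subset hx2
    rw [Set.eq_empty_iff_forall_notMem] at hdisj
    exact hdisj x ⟨hxw, hxw'⟩
  · rw [Set.inter_comm]
    exact aux m n w' w hgt
end
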